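/- Let d ≥ 1 and let θ be uniformly distributed over the 2d equally spaced angles {jπ/d : j = 0, 1, …, 2d−1}. Then for every integer k ≥ 0: E[cos(dθ)·cos^k(θ)] = 0 if k ≢ d (mod 2); E[cos(dθ)·cos^k(θ)] = 0 if k < d; and E[cos(dθ)·cos^d(θ)] = 2^{−(d−1)}. -/

import Mathlib

open Complex Finset

lemma zpow_eq_one_iff_dvd' (d : ℕ) (hd : 1 ≤ d) (e : ℤ) :
    Complex.exp (Real.pi * I / d) ^ e = 1 ↔ (2 * (d:ℤ)) ∣ e := by
  have hd0 : (d:ℂ) ≠ 0 := Nat.cast_ne_zero.mpr (by omega)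
  have hπ : (Real.pi:ℂ) ≠ 0 := Complex.ofReal_ne_zero.mpr Real.pi_ne_zero
  rw [← Complex.exp_int_mul, Complex.exp_eq_one_iff]
  constructor
  · rintro ⟨n, hn⟩
    refine ⟨n, ?_⟩
    field_simp at hn
    have h2 : (e:ℂ) = 2 * d * n := by
      apply mul_right_cancel₀ (b := (Real.pi:ℂ) * I) (mul_ne_zero hπ I_ne_zero)
      linear_combination (Real.pi * I : ℂ) * hn
    exact_mod_cast h2
  · rintro ⟨n, rfl⟩
    exact ⟨n, by field_simp; push_cast; ring⟩

lemma core (d : ℕ) (hd : 1 ≤ d) (k : ℕ) :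
    (∑ j ∈ Finset.range (2 * d),
        Real.cos (d * (j * Real.pi / d)) * Real.cos (j * Real.pi / d) ^ k) =
      (2 : ℝ) ^ (-(k : ℤ)) * ∑ m ∈ Finset.range (k + 1),
        (k.choose m : ℝ) * (if (2 * (d:ℤ)) ∣ (2 * m - k - d) then (2 * d : ℝ) else 0) := by
  have hdR : (d:ℝ) ≠ 0 := Nat.cast_ne_zero.mpr (by omega)
  apply Complex.ofReal_injective
  rw [Complex.ofReal_sum]
  simp only [Complex.ofReal_mul, Complex.ofReal_pow]
  set z : ℂ := Complex.exp (Real.pi * I / d) with hz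
  have hz0 : z ≠ 0 := Complex.exp_ne_zero _
  have hcos : ∀ j : ℕ, ((Real.cos (j * Real.pi / d) : ℝ) : ℂ) = (z ^ (j:ℤ) + z ^ (-(j:ℤ))) / 2 := by
    intro j
    rw [Complex.ofReal_cos, Complex.cos]
    congr 2
    · rw [← Complex.exp_int_mul]
      congr 1
      push_cast
      ring
    · rw [← Complex.exp_int_mul]
      congr 1
      push_cast
      ring
  have hsign : ∀ j : ℕ, ((Real.cos (d * (j * Real.pi / d)) : ℝ) : ℂ) = (-1) ^ j := by
    intro j
    have h1 : (d : ℝ) * (j * Real.pi / d) = j * Real.pi := by field_simp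
    have h2 : Real.cos (j * Real.pi) = (-1) ^ j := by
      simpa using Real.cos_nat_mul_pi_sub 0 j
    rw [h1, h2]
    push_cast
    ring
  calc ∑ j ∈ Finset.range (2 * d),
        ((Real.cos (d * (j * Real.pi / d)) : ℝ) : ℂ) * ((Real.cos (j * Real.pi / d) : ℝ) : ℂ) ^ k
      = ∑ j ∈ Finset.range (2 * d), ∑ m ∈ Finset.range (k + 1),
          (2:ℂ)^(-(k:ℤ)) * (k.choose m : ℂ) * ((-1) * z ^ ((2 * m - k : ℤ))) ^ j := by
        refine Finset.sum_congr rfl fun j _ => ?_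
        rw [hsign j, hcos j, div_pow, add_pow]
        rw [Finset.sum_div, Finset.mul_sum]
        refine Finset.sum_congr rfl fun m hm => ?_
        have hm' : m ≤ k := Nat.lt_succ_iff.mp (Finset.mem_range.mp hm)
        have hzz : (z ^ (j:ℤ)) ^ m * (z ^ (-(j:ℤ))) ^ (k - m) = (z ^ ((2*m - k : ℤ))) ^ j := by
          rw [← zpow_natCast (z ^ (j:ℤ)) m, ← zpow_natCast (z ^ (-(j:ℤ))) (k-m),
            ← zpow_mul, ← zpow_mul, ← zpow_add₀ hz0, ← zpow_natCast (z ^ ((2*m - k : ℤ))) j,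
            ← zpow_mul]
          congr 1
          have hc : (↑(k - m) : ℤ) = (k:ℤ) - m := by
            push_cast [Nat.cast_sub hm']
            ring
          rw [hc]
          ring
        rw [mul_pow, ← hzz]
        rw [zpow_neg, ← zpow_natCast (2:ℂ) k]
        field_simp
        rw [mul_assoc, ← zpow_add₀ (by norm_num : (2:ℂ) ≠ 0), add_neg_cancel, zpow_zero, mul_one]
    _ = (2:ℂ)^(-(k:ℤ)) * ∑ m ∈ Finset.range (k + 1),
          (k.choose m : ℂ) * (if (2 * (d:ℤ)) ∣ (2 * m - k - d) then ((2 * d : ℝ) : ℂ) else ((0:ℝ):ℂ)) := by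
        rw [Finset.sum_comm, Finset.mul_sum]
        refine Finset.sum_congr rfl fun m hm => ?_
        rw [← Finset.mul_sum, mul_assoc]
        congr 1
        congr 1
        set w : ℂ := (-1) * z ^ ((2 * m - k : ℤ)) with hw
        have hw2d : w ^ (2 * d) = 1 := by
          rw [hw, mul_pow, ← zpow_natCast (z ^ ((2*m-k:ℤ))) (2*d), ← zpow_mul]
          rw [(zpow_eq_one_iff_dvd' d hd _).mpr ⟨2*m-k, by push_cast; ring⟩]
          simp [pow_mul]
        have hw1 : w = 1 ↔ (2 * (d:ℤ)) ∣ (2 * m - k - d) := by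
          have hdC : (d:ℂ) ≠ 0 := Nat.cast_ne_zero.mpr (by omega)
          have hzd : z ^ ((d:ℤ)) = -1 := by
            rw [hz, ← Complex.exp_int_mul]
            have hq : (((d:ℕ):ℤ):ℂ) * (Real.pi * I / d) = Real.pi * I := by
              push_cast
              rw [mul_div_assoc']
              rw [mul_comm (d:ℂ), mul_div_assoc, div_self hdC, mul_one]
            rw [hq]
            exact Complex.exp_pi_mul_I
          constructor
          · intro h
            have hm1 : z ^ ((2*m - k : ℤ)) = -1 := by
              rw [hw] at h; linear_combination -h
            have h2 : z ^ ((2*(m:ℤ) - k - d : ℤ)) = 1 := by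
              rw [sub_eq_add_neg, zpow_add₀ hz0, hm1, zpow_neg, hzd]
              norm_num
            exact (zpow_eq_one_iff_dvd' d hd _).mp h2
          · intro h
            have h2 : z ^ ((2*(m:ℤ) - k - d : ℤ)) = 1 := (zpow_eq_one_iff_dvd' d hd _).mpr h
            have h3 : z ^ ((2*m - k : ℤ)) = z ^ ((d:ℤ)) := by
              have h4 := zpow_add₀ hz0 ((2*(m:ℤ) - k - d : ℤ)) ((d:ℤ))
              rw [h2, one_mul] at h4
              rw [← h4]
              congr 1
              ring
            rw [hw, h3, hzd]
            ring
        by_cases h : (2 * (d:ℤ)) ∣ (2 * m - k - d)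
        · rw [if_pos h, hw1.mpr h]
          simp only [one_pow, Finset.sum_const, Finset.card_range, nsmul_eq_mul]
          push_cast
          ring
        · rw [if_neg h]
          have hwne : w ≠ 1 := fun hc => h (hw1.mp hc)
          rw [geom_sum_eq hwne, hw2d]
          simp
    _ = _ := by
        push_cast [apply_ite Complex.ofReal]
        norm_num

/-- Moments of `cos(dθ)·cos^k(θ)` for `θ` uniform on the `2d` equally spaced angles
`{jπ/d : j = 0,…,2d−1}`: the expectation vanishes when `k ≢ d (mod 2)` or `k < d`, and
equals `2^{−(d−1)}` when `k = d`. -/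
theorem stmt11 (d : ℕ) (hd : 1 ≤ d) (k : ℕ) :
    (k % 2 ≠ d % 2 →
      (∑ j ∈ Finset.range (2 * d),
          Real.cos (d * (j * Real.pi / d)) * Real.cos (j * Real.pi / d) ^ k) / (2 * d) = 0) ∧
    (k < d →
      (∑ j ∈ Finset.range (2 * d),
          Real.cos (d * (j * Real.pi / d)) * Real.cos (j * Real.pi / d) ^ k) / (2 * d) = 0) ∧
    ((∑ j ∈ Finset.range (2 * d),
        Real.cos (d * (j * Real.pi / d)) * Real.cos (j * Real.pi / d) ^ d) / (2 * d) =
      (2 : ℝ) ^ (-((d : ℝ) - 1))) := by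
  have hdR : (d:ℝ) ≠ 0 := Nat.cast_ne_zero.mpr (by omega)
  refine ⟨?_, ?_, ?_⟩
  · intro hpar
    rw [core d hd k]
    have hz : ∀ m ∈ Finset.range (k+1),
        (k.choose m : ℝ) * (if (2 * (d:ℤ)) ∣ (2 * m - k - d) then (2 * d : ℝ) else 0) = 0 := by
      intro m hm
      rw [if_neg, mul_zero]
      intro h
      have h2 : (2:ℤ) ∣ (2 * (m:ℤ) - k - d) := dvd_trans ⟨(d:ℤ), rfl⟩ h
      obtain ⟨c, hc⟩ := h2
      omega
    rw [Finset.sum_congr rfl hz]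
    simp
  · intro hkd
    rw [core d hd k]
    have hz : ∀ m ∈ Finset.range (k+1),
        (k.choose m : ℝ) * (if (2 * (d:ℤ)) ∣ (2 * m - k - d) then (2 * d : ℝ) else 0) = 0 := by
      intro m hm
      have hm' : m ≤ k := Nat.lt_succ_iff.mp (Finset.mem_range.mp hm)
      rw [if_neg, mul_zero]
      intro h
      have h0 : (2 * (m:ℤ) - k - d) = 0 :=
        Int.eq_zero_of_dvd_of_natAbs_lt_natAbs h (by omega)
      omega
    rw [Finset.sum_congr rfl hz]
    simp
  · rw [core d hd d]
    have key : ∀ m ∈ Finset.range (d+1),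
        (d.choose m : ℝ) * (if (2 * (d:ℤ)) ∣ (2 * m - d - d) then (2 * d : ℝ) else 0) =
        (if m = 0 ∨ m = d then (2 * d : ℝ) else 0) := by
      intro m hm
      have hm' : m ≤ d := Nat.lt_succ_iff.mp (Finset.mem_range.mp hm)
      by_cases hmd : m = 0 ∨ m = d
      · rw [if_pos hmd, if_pos]
        · rcases hmd with rfl | rfl <;> simp
        · rcases hmd with rfl | rfl
          · exact ⟨-1, by push_cast; ring⟩
          · exact ⟨0, by ring⟩
      · rw [if_neg hmd, if_neg, mul_zero]
        intro h
        have h0 : (2 * (m:ℤ) - d - d) = 0 :=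
          Int.eq_zero_of_dvd_of_natAbs_lt_natAbs h (by omega)
        omega
    rw [Finset.sum_congr rfl key]
    have hsub : ({0, d} : Finset ℕ) ⊆ Finset.range (d+1) := by
      intro x hx
      simp only [Finset.mem_insert, Finset.mem_singleton] at hx
      rcases hx with rfl | rfl <;> simp [Finset.mem_range]
    rw [← Finset.sum_subset hsub (by intro x hx hx'; rw [if_neg]; simpa [Finset.mem_insert] using hx')]
    rw [Finset.sum_pair (by omega : (0:ℕ) ≠ d)]
    rw [if_pos (Or.inl rfl), if_pos (Or.inr rfl)]
    have hrp : (2:ℝ) ^ (-((d : ℝ) - 1)) = (2:ℝ) ^ ((1:ℤ) - d) := by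
      rw [← Real.rpow_intCast]
      congr 1
      push_cast
      ring
    rw [hrp]
    have hP : ((2:ℝ) ^ (d:ℕ)) ≠ 0 := by positivity
    rw [zpow_sub₀ (two_ne_zero), zpow_one, zpow_neg, zpow_natCast]
    field_simp
    ring
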